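/- Let G be a chordal graph and let μ be an integer-valued graph parameter such that μ(H) ≤ μ(G) for every induced subgraph H of G, μ(G) ≤ μ(G-v)+1 for every vertex v, μ(G) = μ(G-v)+1 whenever v is adjacent to all other vertices and G has an edge, and μ(K_t) = t - 1 for every complete graph K_t. Then |E(G)| ≤ μ(G)·|V(G)| - C(μ(G)+1, 2), provided |V(G)| ≥ μ(G). -/

import Mathlib

/-- A graph is chordal if every cycle of length at least 4 has a chord. -/
def IsChordalGraph {V : Type*} (G : SimpleGraph V) : Prop :=
  ∀ (v : V) (c : G.Walk v v), c.IsCycle → 4 ≤ c.length →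
    ∃ u w, u ∈ c.support ∧ w ∈ c.support ∧ G.Adj u w ∧ s(u, w) ∉ c.edges

namespace ChordalProof

open SimpleGraph Walk

variable {V : Type*} {G : SimpleGraph V}

/-- A vertex is simplicial if its neighborhood is a clique. -/
def Simplicial (G : SimpleGraph V) (v : V) : Prop :=
  ∀ ⦃a b : V⦄, G.Adj v a → G.Adj v b → a ≠ b → G.Adj a b

lemma chordal_induce (h : IsChordalGraph G) (s : Set V) :
    IsChordalGraph (G.induce s) := by
  intro v c hc hl
  have hinj : Function.Injective ((SimpleGraph.Embedding.induce (G := G) s) : ↥s → V) :=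
    Subtype.val_injective
  obtain ⟨u, w, hu, hw, hadj, hne⟩ := h _ (c.map (SimpleGraph.Embedding.induce (G := G) s).toHom)
    (hc.map hinj) (by rwa [Walk.length_map])
  rw [Walk.support_map, List.mem_map] at hu hw
  obtain ⟨u₀, hu₀, rfl⟩ := hu
  obtain ⟨w₀, hw₀, rfl⟩ := hw
  refine ⟨u₀, w₀, hu₀, hw₀, by simpa using hadj, fun he => hne ?_⟩
  rw [Walk.edges_map]
  exact List.mem_map.2 ⟨s(u₀, w₀), he, by rfl⟩

lemma adj_of_length_one {x y : V} : ∀ {p : G.Walk x y}, p.length = 1 → G.Adj x y := by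
  intro p h
  cases p with
  | nil => simp at h
  | cons h' p' =>
    cases p' with
    | nil => exact h'
    | cons h'' p'' => simp [Walk.length_cons] at h

lemma shortcut [DecidableEq V] {x y : V} (p : G.Walk x y) :
    (∀ u w, u ∈ p.support → w ∈ p.support → G.Adj u w → s(u, w) ∈ p.edges) ∨
    ∃ q : G.Walk x y, q.length < p.length ∧ ∀ z ∈ q.support, z ∈ p.support := by
  induction p with
  | nil =>
    left
    intro u w hu hw hadj
    simp only [Walk.support_nil, List.mem_singleton] at hu hw
    subst hu; subst hw; exact absurd hadj (G.loopless.irrefl _)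
  | @cons x v y hxv p' ih =>
    rcases ih with hfree | ⟨q', hq'len, hq'sup⟩
    case cons.inr =>
      right
      refine ⟨Walk.cons hxv q', by simp only [Walk.length_cons]; omega, ?_⟩
      intro z hz
      simp only [Walk.support_cons, List.mem_cons] at hz ⊢
      rcases hz with rfl | hz
      · exact Or.inl rfl
      · exact Or.inr (hq'sup z hz)
    · by_cases hx : x ∈ p'.support
      · right
        refine ⟨p'.dropUntil x hx, ?_, ?_⟩
        · have := p'.length_dropUntil_le hx
          simp only [Walk.length_cons]
          omega
        intro z hz
        simp only [Walk.support_cons, List.mem_cons]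
        exact Or.inr (p'.support_dropUntil_subset hx hz)
      · by_cases hchord : ∃ w ∈ p'.support, G.Adj x w ∧ s(x, w) ∉ (Walk.cons hxv p').edges
        · obtain ⟨w, hw, hadj, hne⟩ := hchord
          have hwv : w ≠ v := by
            rintro rfl; exact hne (by simp [Walk.edges_cons])
          right
          refine ⟨Walk.cons hadj (p'.dropUntil w hw), ?_, ?_⟩
          · have hspec := p'.take_spec hw
            have hlen : (p'.takeUntil w hw).length + (p'.dropUntil w hw).length = p'.length := by
              rw [← Walk.length_append, hspec]
            have h1 : 1 ≤ (p'.takeUntil w hw).length := by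
              rcases Nat.eq_zero_or_pos (p'.takeUntil w hw).length with h0 | h0
              · exact absurd (Walk.eq_of_length_eq_zero h0) hwv.symm
              · exact h0
            simp only [Walk.length_cons]
            omega
          · intro z hz
            simp only [Walk.support_cons, List.mem_cons] at hz ⊢
            rcases hz with rfl | hz
            · exact Or.inl rfl
            · exact Or.inr (p'.support_dropUntil_subset hw hz)
        · push_neg at hchord
          left
          intro u w hu hw hadj
          simp only [Walk.support_cons, List.mem_cons] at hu hw
          rcases hu with rfl | hu
          · rcases hw with rfl | hw
            · exact absurd hadj (G.loopless.irrefl _)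
            · exact hchord w hw hadj
          · rcases hw with rfl | hw
            · rw [Sym2.eq_swap]
              exact hchord u hu hadj.symm
            · rw [Walk.edges_cons]
              exact List.mem_cons_of_mem _ (hfree u w hu hw hadj)

lemma exists_min_walk {x y : V} {P : G.Walk x y → Prop} (h : ∃ p, P p) :
    ∃ p, P p ∧ ∀ q, P q → p.length ≤ q.length := by
  classical
  obtain ⟨p0, hp0⟩ := h
  have hex : ∃ n, ∃ p : G.Walk x y, P p ∧ p.length = n := ⟨p0.length, p0, hp0, rfl⟩
  obtain ⟨p, hp, hlen⟩ := Nat.find_spec hex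
  exact ⟨p, hp, fun q hq => by
    rw [hlen]; exact Nat.find_le ⟨q, hq, rfl⟩⟩

lemma exists_min_chordfree [DecidableEq V] {x y : V} {T : Set V}
    (h : ∃ p : G.Walk x y, ∀ z ∈ p.support, z ∈ T) :
    ∃ p : G.Walk x y, p.IsPath ∧ (∀ z ∈ p.support, z ∈ T) ∧
      ∀ u w, u ∈ p.support → w ∈ p.support → G.Adj u w → s(u, w) ∈ p.edges := by
  obtain ⟨p, hp, hmin⟩ := exists_min_walk h
  have hbT : ∀ z ∈ p.bypass.support, z ∈ T := fun z hz => hp z (p.support_bypass_subset hz)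
  have hbmin : ∀ q : G.Walk x y, (∀ z ∈ q.support, z ∈ T) → p.bypass.length ≤ q.length :=
    fun q hq => le_trans p.length_bypass_le (hmin q hq)
  refine ⟨p.bypass, p.bypass_isPath, hbT, ?_⟩
  rcases shortcut p.bypass with hfree | ⟨q, hqlen, hqsup⟩
  · exact hfree
  · exact absurd (hbmin q (fun z hz => hbT z (hqsup z hz)))
      (by omega)

lemma neighbor_of_min_sep [DecidableEq V] {S : Finset V} {a b x : V} (hxa : x ≠ a)
    (p : G.Walk a b) (hx : x ∈ p.support)
    (hav : ∀ z ∈ p.support, z ∉ S.erase x) :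
    ∃ z, G.Adj x z ∧ z ∉ S ∧ ∃ q : G.Walk a z, ∀ y ∈ q.support, y ∉ S := by
  have hcount : (p.takeUntil x hx).support.count x = 1 := p.count_support_takeUntil_eq_one hx
  have hqsub : (p.takeUntil x hx).support ⊆ p.support := p.support_takeUntil_subset hx
  have hnotnil : ¬ (p.takeUntil x hx).reverse.Nil := by
    rw [Walk.not_nil_iff_lt_length, Walk.length_reverse]
    rcases Nat.eq_zero_or_pos (p.takeUntil x hx).length with h0 | h0
    · exact absurd (Walk.eq_of_length_eq_zero h0).symm hxa
    · exact h0
  obtain ⟨z, hadj, r', hr'⟩ := Walk.not_nil_iff.mp hnotnil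
  have hsupp : (p.takeUntil x hx).reverse.support = x :: r'.support := by
    rw [hr', Walk.support_cons]
  have hcr : (p.takeUntil x hx).reverse.support.count x = 1 := by
    rw [Walk.support_reverse, List.count_reverse]; exact hcount
  have hxr' : x ∉ r'.support := by
    rw [hsupp, List.count_cons_self] at hcr
    exact List.count_eq_zero.mp (by omega)
  have hr'S : ∀ y ∈ r'.support, y ∉ S := by
    intro y hy hyS
    have hyq : y ∈ (p.takeUntil x hx).support := by
      rw [← List.mem_reverse, ← Walk.support_reverse, hsupp]
      exact List.mem_cons_of_mem _ hy
    exact hav y (hqsub hyq) (Finset.mem_erase.mpr ⟨fun h => hxr' (h ▸ hy), hyS⟩)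
  refine ⟨z, hadj, hr'S z r'.start_mem_support, r'.reverse, ?_⟩
  intro y hy
  rw [Walk.support_reverse, List.mem_reverse] at hy
  exact hr'S y hy

universe u

lemma dirac (n : ℕ) : ∀ (V : Type u) [Fintype V] [DecidableEq V] (G : SimpleGraph V),
    Fintype.card V ≤ n → IsChordalGraph G →
    (∀ u w : V, u ≠ w → G.Adj u w) ∨
      ∃ v w : V, v ≠ w ∧ ¬G.Adj v w ∧ Simplicial G v ∧ Simplicial G w := by
  induction n with
  | zero =>
    intro V _ _ G hc _
    left
    intro u w _
    have h0 : Fintype.card V = 0 := Nat.le_antisymm hc (Nat.zero_le _)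
    have := Fintype.card_pos_iff.mpr ⟨u⟩
    omega
  | succ n IH =>
    intro V _ _ G hc hch
    classical
    by_cases hn : Fintype.card V ≤ n
    · exact IH V G hn hch
    by_cases hcomp : ∀ u w : V, u ≠ w → G.Adj u w
    · exact Or.inl hcomp
    right
    push_neg at hcomp
    obtain ⟨a, b, hab, hnadj⟩ := hcomp
    have sep0 : a ∉ Finset.univ \ ({a, b} : Finset V) ∧ b ∉ Finset.univ \ ({a, b} : Finset V) ∧
        ∀ p : G.Walk a b, ∃ z ∈ p.support, z ∈ Finset.univ \ ({a, b} : Finset V) := by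
      refine ⟨by simp, by simp, ?_⟩
      intro p
      by_contra hcon
      push_neg at hcon
      have hpn : ¬ p.Nil := by
        rw [Walk.not_nil_iff_lt_length]
        rcases Nat.eq_zero_or_pos p.length with h0 | h0
        · exact absurd (Walk.eq_of_length_eq_zero h0) hab
        · exact h0
      obtain ⟨v, hadj, p', rfl⟩ := Walk.not_nil_iff.mp hpn
      have hv : v ∈ (Walk.cons hadj p').support := by
        rw [Walk.support_cons]; exact List.mem_cons_of_mem _ p'.start_mem_support
      have := hcon v hv
      simp only [Finset.mem_sdiff, Finset.mem_univ, true_and, not_not, Finset.mem_insert,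
        Finset.mem_singleton] at this
      rcases this with rfl | rfl
      · exact G.loopless.irrefl _ hadj
      · exact hnadj hadj
    have hex : ∃ k, ∃ S : Finset V, (a ∉ S ∧ b ∉ S ∧
        ∀ p : G.Walk a b, ∃ z ∈ p.support, z ∈ S) ∧ S.card = k :=
      ⟨_, _, sep0, rfl⟩
    obtain ⟨S, hSsep, hScard⟩ := Nat.find_spec hex
    have hSmin : ∀ S' : Finset V, (a ∉ S' ∧ b ∉ S' ∧
        ∀ p : G.Walk a b, ∃ z ∈ p.support, z ∈ S') → S.card ≤ S'.card := by
      intro S' h'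
      rw [hScard]
      exact Nat.find_le ⟨S', h', rfl⟩
    obtain ⟨haS, hbS, hsepW⟩ := hSsep
    set A : Set V := {z | z ∉ S ∧ ∃ p : G.Walk a z, ∀ x ∈ p.support, x ∉ S} with hA
    set B : Set V := {z | z ∉ S ∧ ∃ p : G.Walk b z, ∀ x ∈ p.support, x ∉ S} with hB
    have hAmem : ∀ z : V, z ∈ A ↔ z ∉ S ∧ ∃ p : G.Walk a z, ∀ x ∈ p.support, x ∉ S := by
      intro z; rw [hA]; exact Iff.rfl
    have hBmem : ∀ z : V, z ∈ B ↔ z ∉ S ∧ ∃ p : G.Walk b z, ∀ x ∈ p.support, x ∉ S := by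
      intro z; rw [hB]; exact Iff.rfl
    have haA : a ∈ A := (hAmem a).mpr ⟨haS, Walk.nil, by simp [haS]⟩
    have hbB : b ∈ B := (hBmem b).mpr ⟨hbS, Walk.nil, by simp [hbS]⟩
    have hreachA : ∀ z ∈ A, ∀ (t : V) (q : G.Walk z t),
        (∀ x ∈ q.support, x ∉ S) → ∀ u ∈ q.support, u ∈ A := by
      intro z hz t q hq u hu
      obtain ⟨hzS, p, hp⟩ := (hAmem z).mp hz
      refine (hAmem u).mpr ⟨hq u hu, p.append (q.takeUntil u hu), ?_⟩
      intro w hw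
      rcases (Walk.mem_support_append_iff _ _).mp hw with h | h
      · exact hp w h
      · exact hq w (q.support_takeUntil_subset hu h)
    have hreachB : ∀ z ∈ B, ∀ (t : V) (q : G.Walk z t),
        (∀ x ∈ q.support, x ∉ S) → ∀ u ∈ q.support, u ∈ B := by
      intro z hz t q hq u hu
      obtain ⟨hzS, p, hp⟩ := (hBmem z).mp hz
      refine (hBmem u).mpr ⟨hq u hu, p.append (q.takeUntil u hu), ?_⟩
      intro w hw
      rcases (Walk.mem_support_append_iff _ _).mp hw with h | h
      · exact hp w h
      · exact hq w (q.support_takeUntil_subset hu h)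
    have hABdisj : ∀ z, z ∈ A → z ∈ B → False := by
      intro z hz1 hz2
      obtain ⟨hzS, p, hp⟩ := (hAmem z).mp hz1
      obtain ⟨_, q, hq⟩ := (hBmem z).mp hz2
      obtain ⟨w, hw, hwS⟩ := hsepW (p.append q.reverse)
      rcases (Walk.mem_support_append_iff _ _).mp hw with h | h
      · exact hp w h hwS
      · rw [Walk.support_reverse, List.mem_reverse] at h
        exact hq w h hwS
    have hASdisj : ∀ z ∈ A, z ∉ S := fun z hz => ((hAmem z).mp hz).1
    have hBSdisj : ∀ z ∈ B, z ∉ S := fun z hz => ((hBmem z).mp hz).1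
    have hadjAB : ∀ z ∈ A, ∀ t ∈ B, ¬ G.Adj z t := by
      intro z hz t ht hadj
      refine hABdisj t ?_ ht
      refine hreachA z hz t (Walk.cons hadj Walk.nil) ?_ t (by simp [Walk.support_cons])
      intro w hw
      simp only [Walk.support_cons, Walk.support_nil, List.mem_cons, List.mem_singleton,
        List.not_mem_nil, or_false] at hw
      rcases hw with rfl | rfl
      · exact hASdisj _ hz
      · exact hBSdisj _ ht
    have hnbrA : ∀ z ∈ A, ∀ w, G.Adj z w → w ∉ S → w ∈ A := by
      intro z hz w hadj hwS
      refine hreachA z hz w (Walk.cons hadj Walk.nil) ?_ w (by simp [Walk.support_cons])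
      intro u hu
      simp only [Walk.support_cons, Walk.support_nil, List.mem_cons, List.mem_singleton,
        List.not_mem_nil, or_false] at hu
      rcases hu with rfl | rfl
      · exact hASdisj _ hz
      · exact hwS
    have hnbrB : ∀ z ∈ B, ∀ w, G.Adj z w → w ∉ S → w ∈ B := by
      intro z hz w hadj hwS
      refine hreachB z hz w (Walk.cons hadj Walk.nil) ?_ w (by simp [Walk.support_cons])
      intro u hu
      simp only [Walk.support_cons, Walk.support_nil, List.mem_cons, List.mem_singleton,
        List.not_mem_nil, or_false] at hu
      rcases hu with rfl | rfl
      · exact hBSdisj _ hz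
      · exact hwS
    have hnbr : ∀ x ∈ S, (∃ z ∈ A, G.Adj x z) ∧ ∃ z ∈ B, G.Adj x z := by
      intro x hxS
      have hxa : x ≠ a := fun h => haS (h ▸ hxS)
      have hxb : x ≠ b := fun h => hbS (h ▸ hxS)
      have hcard1 : 1 ≤ S.card := Finset.card_pos.mpr ⟨x, hxS⟩
      have hane : a ∉ S.erase x := fun h => haS (Finset.mem_of_mem_erase h)
      have hbne : b ∉ S.erase x := fun h => hbS (Finset.mem_of_mem_erase h)
      obtain ⟨p, hp⟩ : ∃ p : G.Walk a b, ∀ z ∈ p.support, z ∉ S.erase x := by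
        by_contra hcon
        push_neg at hcon
        have h' := hSmin (S.erase x) ⟨hane, hbne, fun p => hcon p⟩
        rw [Finset.card_erase_of_mem hxS] at h'
        omega
      have hxp : x ∈ p.support := by
        by_contra hxp
        obtain ⟨z, hz, hzS⟩ := hsepW p
        exact hp z hz (Finset.mem_erase.mpr ⟨fun h => hxp (h ▸ hz), hzS⟩)
      constructor
      · obtain ⟨z, hadj, hzS, q, hq⟩ := neighbor_of_min_sep hxa p hxp hp
        exact ⟨z, (hAmem z).mpr ⟨hzS, q, hq⟩, hadj⟩
      · have hxp' : x ∈ p.reverse.support := by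
          rw [Walk.support_reverse]; exact List.mem_reverse.mpr hxp
        have hp' : ∀ z ∈ p.reverse.support, z ∉ S.erase x := by
          intro z hz
          rw [Walk.support_reverse, List.mem_reverse] at hz
          exact hp z hz
        obtain ⟨z, hadj, hzS, q, hq⟩ := neighbor_of_min_sep hxb p.reverse hxp' hp'
        exact ⟨z, (hBmem z).mpr ⟨hzS, q, hq⟩, hadj⟩
    have hclique : ∀ x ∈ S, ∀ y ∈ S, x ≠ y → G.Adj x y := by
      intro x hxS y hyS hxy
      by_contra hnxy
      obtain ⟨⟨zax, hzaxA, hadjxa⟩, ⟨zbx, hzbxB, hadjxb⟩⟩ := hnbr x hxS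
      obtain ⟨⟨zay, hzayA, hadjya⟩, ⟨zby, hzbyB, hadjyb⟩⟩ := hnbr y hyS
      have hexA : ∃ p : G.Walk x y, ∀ z ∈ p.support, z ∈ {z : V | z = x ∨ z = y ∨ z ∈ A} := by
        obtain ⟨_, p1, hp1⟩ := (hAmem zax).mp hzaxA
        obtain ⟨_, p2, hp2⟩ := (hAmem zay).mp hzayA
        have hpa : ∀ z ∈ (p1.reverse.append p2).support, z ∈ A := by
          intro z hz
          refine hreachA zax hzaxA _ (p1.reverse.append p2) ?_ z hz
          intro u hu
          rcases (Walk.mem_support_append_iff _ _).mp hu with h | h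
          · rw [Walk.support_reverse, List.mem_reverse] at h
            exact hp1 u h
          · exact hp2 u h
        refine ⟨Walk.cons hadjxa ((p1.reverse.append p2).concat hadjya.symm), ?_⟩
        intro z hz
        rw [Walk.support_cons, List.mem_cons] at hz
        rcases hz with rfl | hz
        · exact Or.inl rfl
        · rw [Walk.support_concat, List.mem_append,
            List.mem_singleton] at hz
          rcases hz with hz | rfl
          · exact Or.inr (Or.inr (hpa z hz))
          · exact Or.inr (Or.inl rfl)
      have hexB : ∃ p : G.Walk y x, ∀ z ∈ p.support, z ∈ {z : V | z = y ∨ z = x ∨ z ∈ B} := by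
        obtain ⟨_, q1, hq1⟩ := (hBmem zby).mp hzbyB
        obtain ⟨_, q2, hq2⟩ := (hBmem zbx).mp hzbxB
        have hpb : ∀ z ∈ (q1.reverse.append q2).support, z ∈ B := by
          intro z hz
          refine hreachB zby hzbyB _ (q1.reverse.append q2) ?_ z hz
          intro u hu
          rcases (Walk.mem_support_append_iff _ _).mp hu with h | h
          · rw [Walk.support_reverse, List.mem_reverse] at h
            exact hq1 u h
          · exact hq2 u h
        refine ⟨Walk.cons hadjyb ((q1.reverse.append q2).concat hadjxb.symm), ?_⟩
        intro z hz
        rw [Walk.support_cons, List.mem_cons] at hz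
        rcases hz with rfl | hz
        · exact Or.inl rfl
        · rw [Walk.support_concat, List.mem_append,
            List.mem_singleton] at hz
          rcases hz with hz | rfl
          · exact Or.inr (Or.inr (hpb z hz))
          · exact Or.inr (Or.inl rfl)
      obtain ⟨p1, hp1path, hp1T, hp1chord⟩ := exists_min_chordfree hexA
      obtain ⟨p2, hp2path, hp2T, hp2chord⟩ := exists_min_chordfree hexB
      have hp1T' : ∀ z ∈ p1.support, z = x ∨ z = y ∨ z ∈ A := hp1T
      have hp2T' : ∀ z ∈ p2.support, z = y ∨ z = x ∨ z ∈ B := hp2T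
      have hlen1 : 2 ≤ p1.length := by
        by_contra h
        push_neg at h
        have h' : p1.length = 0 ∨ p1.length = 1 := by omega
        rcases h' with h0 | h1
        · exact hxy (Walk.eq_of_length_eq_zero h0)
        · exact hnxy (adj_of_length_one h1)
      have hlen2 : 2 ≤ p2.length := by
        by_contra h
        push_neg at h
        have h' : p2.length = 0 ∨ p2.length = 1 := by omega
        rcases h' with h0 | h1
        · exact hxy (Walk.eq_of_length_eq_zero h0).symm
        · exact hnxy (adj_of_length_one h1).symm
      have hxA : x ∉ A := fun h => hASdisj x h hxS
      have hyA : y ∉ A := fun h => hASdisj y h hyS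
      have hxB : x ∉ B := fun h => hBSdisj x h hxS
      have hyB : y ∉ B := fun h => hBSdisj y h hyS
      have hcommon : ∀ w, w ∈ p1.support → w ∈ p2.support → w = x ∨ w = y := by
        intro w h1' h2'
        rcases hp1T' w h1' with rfl | rfl | hA'
        · exact Or.inl rfl
        · exact Or.inr rfl
        · rcases hp2T' w h2' with rfl | rfl | hB'
          · exact absurd hA' hyA
          · exact absurd hA' hxA
          · exact absurd hB' (fun h => hABdisj w hA' h)
      have hdisjE : ∀ u v : V, s(u, v) ∈ p1.edges → s(u, v) ∈ p2.edges → False := by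
        intro u v h1 h2
        have hu1 := p1.fst_mem_support_of_mem_edges h1
        have hv1 := p1.snd_mem_support_of_mem_edges h1
        have hu2 := p2.fst_mem_support_of_mem_edges h2
        have hv2 := p2.snd_mem_support_of_mem_edges h2
        have hadjuv : G.Adj u v := p1.adj_of_mem_edges h1
        rcases hcommon u hu1 hu2 with rfl | rfl
        · rcases hcommon v hv1 hv2 with rfl | rfl
          · exact G.loopless.irrefl _ hadjuv
          · exact hnxy hadjuv
        · rcases hcommon v hv1 hv2 with rfl | rfl
          · exact hnxy hadjuv.symm
          · exact G.loopless.irrefl _ hadjuv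
      have hnd1 := hp1path.support_nodup
      have hnd2 := hp2path.support_nodup
      have hx1 : x ∉ p1.support.tail := by
        have h' := hnd1
        rw [p1.support_eq_cons] at h'
        exact (List.nodup_cons.mp h').1
      have hy2 : y ∉ p2.support.tail := by
        have h' := hnd2
        rw [p2.support_eq_cons] at h'
        exact (List.nodup_cons.mp h').1
      have htail1 : ∀ z ∈ p1.support.tail, z = y ∨ z ∈ A := by
        intro z hz
        have hzs : z ∈ p1.support := by
          rw [p1.support_eq_cons]
          exact List.mem_cons_of_mem _ hz
        rcases hp1T' z hzs with rfl | h | h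
        · exact absurd hz hx1
        · exact Or.inl h
        · exact Or.inr h
      have htail2 : ∀ z ∈ p2.support.tail, z = x ∨ z ∈ B := by
        intro z hz
        have hzs : z ∈ p2.support := by
          rw [p2.support_eq_cons]
          exact List.mem_cons_of_mem _ hz
        rcases hp2T' z hzs with rfl | h | h
        · exact absurd hz hy2
        · exact Or.inl h
        · exact Or.inr h
      have hcycle : (p1.append p2).IsCycle := by
        refine ⟨⟨⟨?_⟩, ?_⟩, ?_⟩
        · rw [Walk.edges_append]
          refine List.Nodup.append hp1path.isTrail.edges_nodup hp2path.isTrail.edges_nodup ?_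
          intro e he1 he2
          revert he1 he2
          induction e using Sym2.ind with
          | _ u v => exact fun h1 h2 => hdisjE u v h1 h2
        · intro hnil
          have hl := Walk.length_append p1 p2
          rw [hnil] at hl
          simp only [Walk.length_nil] at hl
          omega
        · rw [Walk.tail_support_append]
          refine List.Nodup.append ?_ ?_ ?_
          · rw [p1.support_eq_cons] at hnd1
            exact (List.nodup_cons.mp hnd1).2
          · rw [p2.support_eq_cons] at hnd2
            exact (List.nodup_cons.mp hnd2).2
          · intro z hz1 hz2
            rcases htail1 z hz1 with rfl | hA'
            · rcases htail2 z hz2 with h | hB'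
              · exact hxy h.symm
              · exact hyB hB'
            · rcases htail2 z hz2 with rfl | hB'
              · exact hxA hA'
              · exact hABdisj z hA' hB'
      have hclen : 4 ≤ (p1.append p2).length := by
        rw [Walk.length_append]
        omega
      obtain ⟨u, w, hu, hw, hadj, hne⟩ := hch x (p1.append p2) hcycle hclen
      apply hne
      have hkey1 : ∀ u' w', u' ∈ p1.support → w' ∈ p1.support → G.Adj u' w' →
          s(u', w') ∈ (p1.append p2).edges := by
        intro u' w' h1' h2' ha
        rw [Walk.edges_append]
        exact List.mem_append_left _ (hp1chord u' w' h1' h2' ha)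
      have hkey2 : ∀ u' w', u' ∈ p2.support → w' ∈ p2.support → G.Adj u' w' →
          s(u', w') ∈ (p1.append p2).edges := by
        intro u' w' h1' h2' ha
        rw [Walk.edges_append]
        exact List.mem_append_right _ (hp2chord u' w' h1' h2' ha)
      have hx2 : x ∈ p2.support := p2.end_mem_support
      have hy1 : y ∈ p1.support := p1.end_mem_support
      have hx1' : x ∈ p1.support := p1.start_mem_support
      have hy2' : y ∈ p2.support := p2.start_mem_support
      rcases (Walk.mem_support_append_iff _ _).mp hu with hu1 | hu2
      · rcases (Walk.mem_support_append_iff _ _).mp hw with hw1 | hw2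
        · exact hkey1 u w hu1 hw1 hadj
        · rcases hp1T' u hu1 with rfl | rfl | huA
          · exact hkey2 u w hx2 hw2 hadj
          · exact hkey2 u w hy2' hw2 hadj
          · rcases hp2T' w hw2 with rfl | rfl | hwB
            · exact hkey1 u w hu1 hy1 hadj
            · exact hkey1 u w hu1 hx1' hadj
            · exact absurd hadj (hadjAB u huA w hwB)
      · rcases (Walk.mem_support_append_iff _ _).mp hw with hw1 | hw2
        · rcases hp2T' u hu2 with rfl | rfl | huB
          · exact hkey1 u w hy1 hw1 hadj
          · exact hkey1 u w hx1' hw1 hadj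
          · rcases hp1T' w hw1 with rfl | rfl | hwA
            · exact hkey2 u w hu2 hx2 hadj
            · exact hkey2 u w hu2 hy2' hadj
            · exact absurd hadj.symm (hadjAB w hwA u huB)
        · exact hkey2 u w hu2 hw2 hadj
    have hcardV : Fintype.card V = n + 1 := Nat.le_antisymm hc (by omega)
    have side : ∀ (C : Set V) (c₀ t : V), c₀ ∈ C →
        (∀ z ∈ C, ∀ w, G.Adj z w → w ∉ S → w ∈ C) →
        (∀ z ∈ C, z ∉ S) →
        t ∉ C → t ∉ S →
        ∃ v ∈ C, Simplicial G v := by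
      intro C c₀ t hc₀ hCnbr hCS htC htS
      have hts : t ∉ (C ∪ ↑S : Set V) := by
        rintro (h | h)
        · exact htC h
        · exact htS (by simpa using h)
      have hcardle : Fintype.card ↥(C ∪ ↑S : Set V) ≤ n := by
        have hlt : Fintype.card ↥(C ∪ ↑S : Set V) < Fintype.card V :=
          Fintype.card_lt_of_injective_of_notMem (Subtype.val) Subtype.val_injective
            (b := t) (by rintro ⟨⟨u, hu⟩, rfl⟩; exact hts hu)
        omega
      have hnbr_in : ∀ z ∈ C, ∀ w, G.Adj z w → w ∈ (C ∪ ↑S : Set V) := by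
        intro z hz w hadj
        by_cases hwS : w ∈ S
        · exact Or.inr (by simpa using hwS)
        · exact Or.inl (hCnbr z hz w hadj hwS)
      rcases IH ↥(C ∪ ↑S : Set V) (G.induce _) hcardle (chordal_induce hch _) with
        hcomp' | ⟨v', w', hne', hnadj', hsv', hsw'⟩
      · refine ⟨c₀, hc₀, ?_⟩
        intro pp qq hp hq hpq
        have h1 : (G.induce (C ∪ ↑S : Set V)).Adj ⟨pp, hnbr_in c₀ hc₀ pp hp⟩
            ⟨qq, hnbr_in c₀ hc₀ qq hq⟩ :=
          hcomp' _ _ (fun h => hpq (congrArg Subtype.val h))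
        simpa using h1
      · have hlift : ∀ v : ↥(C ∪ ↑S : Set V), (v : V) ∈ C →
            Simplicial (G.induce (C ∪ ↑S : Set V)) v → ∃ u ∈ C, Simplicial G u := by
          intro v hvC hsimp
          refine ⟨v, hvC, ?_⟩
          intro pp qq hp hq hpq
          have h1 := hsimp (a := ⟨pp, hnbr_in v hvC pp hp⟩) (b := ⟨qq, hnbr_in v hvC qq hq⟩)
            (by simpa using hp) (by simpa using hq) (fun h => hpq (congrArg Subtype.val h))
          simpa using h1
        have hvw : (v' : V) ∈ C ∨ (w' : V) ∈ C := by
          by_contra hcon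
          push_neg at hcon
          have hv'S : (v' : V) ∈ S := by
            rcases v'.2 with h | h
            · exact absurd h hcon.1
            · simpa using h
          have hw'S : (w' : V) ∈ S := by
            rcases w'.2 with h | h
            · exact absurd h hcon.2
            · simpa using h
          have hadj' : G.Adj v' w' :=
            hclique _ hv'S _ hw'S (fun h => hne' (Subtype.ext h))
          exact hnadj' (by simpa using hadj')
        rcases hvw with h | h
        · exact hlift v' h hsv'
        · exact hlift w' h hsw'
    have hbA : b ∉ A := fun h => hABdisj b h hbB
    have haB : a ∉ B := fun h => hABdisj a haA h
    obtain ⟨vA, hvA, hsimpA⟩ := side A a b haA hnbrA hASdisj hbA hbS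
    obtain ⟨vB, hvB, hsimpB⟩ := side B b a hbB hnbrB hBSdisj haB haS
    exact ⟨vA, vB, fun h => hABdisj vA hvA (h ▸ hvB), hadjAB vA hvA vB hvB, hsimpA, hsimpB⟩

lemma exists_simplicial {V : Type u} [Fintype V] [DecidableEq V] (G : SimpleGraph V)
    [Nonempty V] (hch : IsChordalGraph G) : ∃ v, Simplicial G v := by
  rcases dirac (Fintype.card V) V G le_rfl hch with hcomp | ⟨v, w, _, _, hv, _⟩
  · exact ⟨Classical.arbitrary V, fun a b h1 h2 hne => hcomp a b hne⟩
  · exact ⟨v, hv⟩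

lemma card_edge_induce_compl {V : Type*} [Fintype V] [DecidableEq V] (G : SimpleGraph V)
    [DecidableRel G.Adj] (v : V) [Fintype (G.induce ({v}ᶜ : Set V)).edgeSet] :
    G.edgeFinset.card = (G.induce ({v}ᶜ : Set V)).edgeFinset.card + G.degree v := by
  classical
  have hsplit := Finset.card_filter_add_card_filter_not
    (s := G.edgeFinset) (p := fun e => v ∈ e)
  have hdeg : (G.edgeFinset.filter (fun e => v ∈ e)).card = G.degree v := by
    rw [← SimpleGraph.card_incidenceFinset_eq_degree]
    congr 1
    rw [SimpleGraph.incidenceFinset_eq_filter]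
  have hbij : (G.edgeFinset.filter (fun e => ¬ v ∈ e)).card
      = (G.induce ({v}ᶜ : Set V)).edgeFinset.card := by
    refine (Finset.card_bij (fun e _ => Sym2.map Subtype.val e) ?_ ?_ ?_).symm
    · intro e he
      revert he
      induction e using Sym2.ind with
      | _ p q =>
        intro he
        rw [SimpleGraph.mem_edgeFinset, SimpleGraph.mem_edgeSet] at he
        simp only [Sym2.map_pair_eq, Finset.mem_filter, SimpleGraph.mem_edgeFinset,
          SimpleGraph.mem_edgeSet, Sym2.mem_iff]
        refine ⟨by simpa using he, ?_⟩
        rintro (h | h)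
        · exact p.2 h.symm
        · exact q.2 h.symm
    · intro e1 he1 e2 he2 heq
      exact Sym2.map.injective Subtype.val_injective heq
    · intro e he
      rw [Finset.mem_filter, SimpleGraph.mem_edgeFinset] at he
      obtain ⟨he1, he2⟩ := he
      revert he1 he2
      induction e using Sym2.ind with
      | _ p q =>
        intro he1 he2
        rw [SimpleGraph.mem_edgeSet] at he1
        have hp : p ∈ ({v}ᶜ : Set V) := by
          simp only [Set.mem_compl_iff, Set.mem_singleton_iff]
          intro h
          exact he2 (by rw [h]; simp)
        have hq : q ∈ ({v}ᶜ : Set V) := by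
          simp only [Set.mem_compl_iff, Set.mem_singleton_iff]
          intro h
          exact he2 (by rw [h]; simp)
        refine ⟨s(⟨p, hp⟩, ⟨q, hq⟩), ?_, by simp [Sym2.map_pair_eq]⟩
        rw [SimpleGraph.mem_edgeFinset, SimpleGraph.mem_edgeSet]
        simpa using he1
  omega

lemma choose_two_succ (m : ℕ) : (m + 1).choose 2 = m.choose 2 + m := by
  have h := Nat.choose_succ_succ m 1
  simpa [Nat.choose_one_right, Nat.add_comm] using h

lemma two_choose_two_succ (n : ℕ) : 2 * (n + 1).choose 2 = (n + 1) * n := by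
  induction n with
  | zero => simp
  | succ k ih =>
    rw [choose_two_succ (k + 1), Nat.mul_add, ih]
    ring

lemma mono_aux : ∀ (k m' N : ℕ), m' + k ≤ N →
    m' * N + (m' + k + 1).choose 2 ≤ (m' + k) * N + (m' + 1).choose 2 := by
  intro k
  induction k with
  | zero => simp
  | succ k ih =>
    intro m' N h
    have e1 : m' + (k + 1) + 1 = (m' + k + 1) + 1 := by omega
    have e2 : m' + (k + 1) = (m' + k) + 1 := by omega
    rw [e1, choose_two_succ, e2]
    have h1 := ih m' N (by omega)
    have e3 : ((m' + k) + 1) * N = (m' + k) * N + N := by ring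
    rw [e3]
    set a := m' * N with ha
    set b := (m' + k) * N with hb
    set c := (m' + k + 1).choose 2 with hc
    set d := (m' + 1).choose 2 with hd
    omega

lemma bound (μ : ∀ (V : Type) [Fintype V] [DecidableEq V], SimpleGraph V → ℕ)
    (hmono : ∀ (V : Type) [Fintype V] [DecidableEq V] (G : SimpleGraph V)
      (s : Set V) [DecidablePred (· ∈ s)], μ ↥s (G.induce s) ≤ μ V G)
    (hcomplete : ∀ (V : Type) [Fintype V] [DecidableEq V],
      μ V (⊤ : SimpleGraph V) = Fintype.card V - 1) :
    ∀ (n : ℕ) (V : Type) [Fintype V] [DecidableEq V] (G : SimpleGraph V),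
      Fintype.card V ≤ n → IsChordalGraph G → μ V G ≤ Fintype.card V →
      G.edgeSet.ncard + (μ V G + 1).choose 2 ≤ μ V G * Fintype.card V := by
  intro n
  induction n with
  | zero =>
    intro V _ _ G hc _ hμ
    have hcard : Fintype.card V = 0 := Nat.le_antisymm hc (Nat.zero_le _)
    have hie : IsEmpty V := Fintype.card_eq_zero_iff.mp hcard
    have hμ0 : μ V G = 0 := by omega
    have hE : G.edgeSet = ∅ := by
      ext e
      induction e using Sym2.ind with
      | _ u v => exact iff_of_false (fun _ => hie.false u) (fun h => h.elim)
    rw [hμ0, hE]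
    simp
  | succ n IH =>
    intro V _ _ G hc hch hμ
    classical
    by_cases hn : Fintype.card V ≤ n
    · exact IH V G hn hch hμ
    have hcard : Fintype.card V = n + 1 := Nat.le_antisymm hc (by omega)
    have hEncard : G.edgeSet.ncard = G.edgeFinset.card := by
      rw [← SimpleGraph.coe_edgeFinset, Set.ncard_coe_finset]
    by_cases hbig : Fintype.card V ≤ μ V G + 1
    · -- trivial regime: μ = card or μ + 1 = card
      have hE : G.edgeFinset.card ≤ (Fintype.card V).choose 2 :=
        SimpleGraph.card_edgeFinset_le_card_choose_two
      have hE2 : 2 * G.edgeFinset.card ≤ (n + 1) * n := by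
        have := two_choose_two_succ n
        rw [hcard] at hE
        omega
      have h2m := two_choose_two_succ (μ V G)
      rcases (by omega : μ V G = n + 1 ∨ μ V G = n) with he | he
      · rw [hEncard, hcard, he]
        have h2m' := two_choose_two_succ (n + 1)
        nlinarith [h2m']
      · rw [hEncard, hcard, he]
        have h2m'' := two_choose_two_succ n
        nlinarith [h2m'']
    · -- main regime
      have hne : Nonempty V := by
        rw [← Fintype.card_pos_iff]
        omega
      obtain ⟨v, hsimp⟩ := exists_simplicial G hch
      -- degree bound via clique on closed neighborhood
      have hdm : G.degree v ≤ μ V G := by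
        have hind : G.induce (↑(insert v (G.neighborFinset v)) : Set V) = ⊤ := by
          ext ⟨p, hp⟩ ⟨q, hq⟩
          simp only [SimpleGraph.comap_adj, Function.Embedding.coe_subtype, SimpleGraph.top_adj,
            ne_eq, Subtype.mk.injEq]
          constructor
          · intro h
            exact G.ne_of_adj h
          · intro hpq
            simp only [Finset.coe_insert, Set.mem_insert_iff, Finset.mem_coe,
              SimpleGraph.mem_neighborFinset] at hp hq
            rcases hp with rfl | hp
            · rcases hq with rfl | hq
              · exact absurd rfl hpq
              · exact hq
            · rcases hq with rfl | hq
              · exact hp.symm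
              · exact hsimp hp hq hpq
        have h1 := hmono V G (↑(insert v (G.neighborFinset v)) : Set V)
        rw [hind, hcomplete] at h1
        simp only [← Nat.card_eq_fintype_card] at h1
        have hcs : Nat.card ↥(↑(insert v (G.neighborFinset v)) : Set V)
            = G.degree v + 1 := by
          rw [Nat.card_eq_fintype_card, ← Set.toFinset_card, Finset.toFinset_coe,
            Finset.card_insert_of_notMem (by simp)]
          rfl
        omega
      have hEdec : G.edgeFinset.card
          = (G.induce ({v}ᶜ : Set V)).edgeFinset.card + G.degree v :=
        card_edge_induce_compl G v
      have hccompl : Fintype.card ↥({v}ᶜ : Set V) = n := by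
        rw [Fintype.card_compl_set]
        simp [hcard]
      have hch' := chordal_induce hch ({v}ᶜ : Set V)
      have hm' : μ ↥({v}ᶜ : Set V) (G.induce ({v}ᶜ : Set V)) ≤ μ V G := hmono V G _
      have hIH := IH ↥({v}ᶜ : Set V) (G.induce ({v}ᶜ : Set V)) (by omega) hch' (by omega)
      have hE'ncard : (G.induce ({v}ᶜ : Set V)).edgeSet.ncard
          = (G.induce ({v}ᶜ : Set V)).edgeFinset.card := by
        rw [← SimpleGraph.coe_edgeFinset, Set.ncard_coe_finset]
      rw [hE'ncard, hccompl] at hIH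
      have hmono2 := mono_aux (μ V G - μ ↥({v}ᶜ : Set V) (G.induce ({v}ᶜ : Set V)))
        (μ ↥({v}ᶜ : Set V) (G.induce ({v}ᶜ : Set V))) n (by omega)
      have e3 : μ ↥({v}ᶜ : Set V) (G.induce ({v}ᶜ : Set V))
          + (μ V G - μ ↥({v}ᶜ : Set V) (G.induce ({v}ᶜ : Set V))) = μ V G := by omega
      rw [e3] at hmono2
      rw [hEncard, hEdec, hcard]
      have e4 : μ V G * (n + 1) = μ V G * n + μ V G := by ring
      rw [e4]
      set p1 := μ ↥({v}ᶜ : Set V) (G.induce ({v}ᶜ : Set V)) * n with hp1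
      set p2 := μ V G * n with hp2
      set c1 := (μ V G + 1).choose 2 with hc1
      set c2 := (μ ↥({v}ᶜ : Set V) (G.induce ({v}ᶜ : Set V)) + 1).choose 2 with hc2
      omega

end ChordalProof

theorem stmt_6
    (μ : ∀ (V : Type) [Fintype V] [DecidableEq V], SimpleGraph V → ℕ)
    (hmono : ∀ (V : Type) [Fintype V] [DecidableEq V] (G : SimpleGraph V)
      (s : Set V) [DecidablePred (· ∈ s)], μ ↥s (G.induce s) ≤ μ V G)
    (hdel : ∀ (V : Type) [Fintype V] [DecidableEq V] (G : SimpleGraph V) (v : V),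
      μ V G ≤ μ ↥({v}ᶜ : Set V) (G.induce {v}ᶜ) + 1)
    (hdom : ∀ (V : Type) [Fintype V] [DecidableEq V] (G : SimpleGraph V) (v : V),
      (∀ w : V, w ≠ v → G.Adj v w) → G.edgeSet.Nonempty →
      μ V G = μ ↥({v}ᶜ : Set V) (G.induce {v}ᶜ) + 1)
    (hcomplete : ∀ (V : Type) [Fintype V] [DecidableEq V],
      μ V (⊤ : SimpleGraph V) = Fintype.card V - 1)
    (V : Type) [Fintype V] [DecidableEq V] (G : SimpleGraph V)
    (hchordal : IsChordalGraph G) (hcard : μ V G ≤ Fintype.card V) :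
    (G.edgeSet.ncard : ℤ) ≤ μ V G * Fintype.card V - ((μ V G + 1).choose 2 : ℕ) := by
  have h := ChordalProof.bound μ hmono hcomplete (Fintype.card V) V G le_rfl hchordal hcard
  rw [← Nat.cast_mul]
  set K := μ V G * Fintype.card V with hK
  set E := G.edgeSet.ncard with hE
  set C := (μ V G + 1).choose 2 with hC
  omega
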